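/- (Proposition 3(1): BPR comparative statics under aligned preferences.) Assume λ and c are twice continuously differentiable on their domains, fix d_B > 0, and let I ⊆ (0, +∞) be an open interval. Suppose a, b : I → (0,1) are differentiable functions such that for every t ∈ I the profile (a(t), b(t)) is an interior Nash equilibrium for parameters d_A = t and d_B, i.e., λ(a(t)) + (2/t²)·c'(a(t))/λ'(a(t)) = 2 − λ(b(t))·d_B/t and λ(b(t)) + (2/d_B²)·c'(b(t))/λ'(b(t)) = 2 − λ(a(t))·t/d_B for all t ∈ I. Then a'(t) > 0 and b'(t) < 0 on I: each member's equilibrium revelation increases with their own diversity and decreases with the other member's diversity. -/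

import Mathlib

open Set Filter

set_option maxHeartbeats 2000000

/-- Team decision formed by the two digital representatives. -/
noncomputable def teamDec (lam : ℝ → ℝ) (thA thB mu : ℝ) (aA aB : ℝ) : ℝ :=
  (lam aA * thA + (1 - lam aA) * mu + lam aB * thB + (1 - lam aB) * mu) / 2

/-- Alice's total loss: preference loss plus communication cost. -/
noncomputable def lossA (lam c : ℝ → ℝ) (thA thB mu : ℝ) (aA aB : ℝ) : ℝ :=
  (thA - teamDec lam thA thB mu aA aB) ^ 2 + c aA

/-- Bob's total loss: preference loss plus communication cost. -/
noncomputable def lossB (lam c : ℝ → ℝ) (thA thB mu : ℝ) (aA aB : ℝ) : ℝ :=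
  (thB - teamDec lam thA thB mu aA aB) ^ 2 + c aB

/-- The function `f_m(α) = λ(α) + (2/d_m²)·c'(α)/λ'(α)`. -/
noncomputable def fFun (lam lam' c' : ℝ → ℝ) (d : ℝ) (α : ℝ) : ℝ :=
  lam α + (2 / d ^ 2) * (c' α / lam' α)

/-- The function `h_m(α) = 2 − λ(α)·d_{−m}/d_m`. -/
noncomputable def hFun (lam : ℝ → ℝ) (dm dOther : ℝ) (α : ℝ) : ℝ :=
  2 - lam α * dOther / dm

/-- `a` is a best response of Alice to Bob's revelation `aB`:
it minimizes `α ↦ L_A(α, aB)` over `[0,1)`. -/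
def IsBestRespA (lam c : ℝ → ℝ) (thA thB mu : ℝ) (a aB : ℝ) : Prop :=
  a ∈ Set.Ico (0:ℝ) 1 ∧
    ∀ x ∈ Set.Ico (0:ℝ) 1, lossA lam c thA thB mu a aB ≤ lossA lam c thA thB mu x aB

/-- Nash equilibrium of the digital representative game. -/
def IsNashEq (lam c : ℝ → ℝ) (thA thB mu : ℝ) (aA aB : ℝ) : Prop :=
  aA ∈ Set.Ico (0:ℝ) 1 ∧ aB ∈ Set.Ico (0:ℝ) 1 ∧
  (∀ α ∈ Set.Ico (0:ℝ) 1, lossA lam c thA thB mu aA aB ≤ lossA lam c thA thB mu α aB) ∧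
  (∀ α ∈ Set.Ico (0:ℝ) 1, lossB lam c thA thB mu aA aB ≤ lossB lam c thA thB mu aA α)

/-- If `f` is monotone on a neighborhood `s` of `x` and has derivative `d` at `x`,
then `0 ≤ d`. -/
lemma deriv_nonneg_of_monotoneOn_aux {f : ℝ → ℝ} {d x : ℝ} {s : Set ℝ}
    (hs : s ∈ nhds x) (hm : MonotoneOn f s) (hd : HasDerivAt f d x) : 0 ≤ d := by
  have hx : x ∈ s := mem_of_mem_nhds hs
  have ht : Tendsto (slope f x) (nhdsWithin x (Set.Ioi x)) (nhds d) := by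
    have := hasDerivAt_iff_tendsto_slope.mp hd
    exact this.mono_left (nhdsWithin_mono x (fun y hy => ne_of_gt hy))
  refine ge_of_tendsto ht ?_
  filter_upwards [mem_nhdsWithin_of_mem_nhds hs, self_mem_nhdsWithin] with y hy hy'
  rw [slope_def_field]
  have hxy : x < y := hy'
  exact div_nonneg (sub_nonneg.mpr (hm hx hy hxy.le)) (sub_nonneg.mpr hxy.le)

/-- Proposition 3(1): BPR comparative statics, aligned preferences.
Along a differentiable family of interior equilibria parameterized by Alice's diversity
`d_A = t > 0` with fixed `d_B > 0`, Alice's revelation strictly increases and Bob's strictly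
decreases in `t`. -/
theorem BPR_comparative_statics_aligned
    (lam lam' c c' : ℝ → ℝ)
    (hlamDeriv : ∀ α ∈ Set.Icc (0:ℝ) 1, HasDerivAt lam (lam' α) α)
    (hlam'Cont : ContinuousOn lam' (Set.Icc (0:ℝ) 1))
    (hlam0 : lam 0 = 0) (hlam1 : lam 1 = 1)
    (hlam'pos : ∀ α ∈ Set.Icc (0:ℝ) 1, 0 < lam' α)
    (hlam'anti : ∀ x ∈ Set.Icc (0:ℝ) 1, ∀ y ∈ Set.Icc (0:ℝ) 1, x ≤ y → lam' y ≤ lam' x)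
    (hcDeriv : ∀ α ∈ Set.Ico (0:ℝ) 1, HasDerivAt c (c' α) α)
    (hc'Cont : ContinuousOn c' (Set.Ico (0:ℝ) 1))
    (hc0 : c 0 = 0)
    (hc'nonneg : ∀ α ∈ Set.Ico (0:ℝ) 1, 0 ≤ c' α)
    (hc'strictMono : ∀ x ∈ Set.Ico (0:ℝ) 1, ∀ y ∈ Set.Ico (0:ℝ) 1, x < y → c' x < c' y)
    (hc'top : Filter.Tendsto c' (nhdsWithin 1 (Set.Iio 1)) Filter.atTop)
    (lam'' c'' : ℝ → ℝ)
    (hlam'Deriv : ∀ α ∈ Set.Icc (0:ℝ) 1, HasDerivAt lam' (lam'' α) α)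
    (hlam''Cont : ContinuousOn lam'' (Set.Icc (0:ℝ) 1))
    (hc'Deriv : ∀ α ∈ Set.Ico (0:ℝ) 1, HasDerivAt c' (c'' α) α)
    (hc''Cont : ContinuousOn c'' (Set.Ico (0:ℝ) 1))
    (dB : ℝ) (hdB : 0 < dB)
    (lo hi : ℝ) (hsub : Set.Ioo lo hi ⊆ Set.Ioi (0:ℝ))
    (a a' b b' : ℝ → ℝ)
    (hda : ∀ t ∈ Set.Ioo lo hi, HasDerivAt a (a' t) t)
    (hdb : ∀ t ∈ Set.Ioo lo hi, HasDerivAt b (b' t) t)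
    (hamem : ∀ t ∈ Set.Ioo lo hi, a t ∈ Set.Ioo (0:ℝ) 1)
    (hbmem : ∀ t ∈ Set.Ioo lo hi, b t ∈ Set.Ioo (0:ℝ) 1)
    (hfocA : ∀ t ∈ Set.Ioo lo hi, fFun lam lam' c' t (a t) = hFun lam t dB (b t))
    (hfocB : ∀ t ∈ Set.Ioo lo hi, fFun lam lam' c' dB (b t) = hFun lam dB t (a t)) :
    ∀ t ∈ Set.Ioo lo hi, 0 < a' t ∧ b' t < 0 := by
  intro t ht
  have ht0 : 0 < t := hsub ht
  have htne : t ≠ 0 := ne_of_gt ht0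
  have hdBne : dB ≠ 0 := ne_of_gt hdB
  have haI := hamem t ht
  have hbI := hbmem t ht
  have haIcc : a t ∈ Icc (0:ℝ) 1 := ⟨haI.1.le, haI.2.le⟩
  have haIco : a t ∈ Ico (0:ℝ) 1 := ⟨haI.1.le, haI.2⟩
  have hbIcc : b t ∈ Icc (0:ℝ) 1 := ⟨hbI.1.le, hbI.2.le⟩
  have hbIco : b t ∈ Ico (0:ℝ) 1 := ⟨hbI.1.le, hbI.2⟩
  have h0Icc : (0:ℝ) ∈ Icc (0:ℝ) 1 := ⟨le_rfl, zero_le_one⟩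
  have h0Ico : (0:ℝ) ∈ Ico (0:ℝ) 1 := ⟨le_rfl, zero_lt_one⟩
  have hApos : 0 < lam' (a t) := hlam'pos _ haIcc
  have hBpos : 0 < lam' (b t) := hlam'pos _ hbIcc
  have hAne : lam' (a t) ≠ 0 := ne_of_gt hApos
  have hBne : lam' (b t) ≠ 0 := ne_of_gt hBpos
  -- lam positive at a t, b t
  have hlamMono : StrictMonoOn lam (Icc (0:ℝ) 1) := by
    apply strictMonoOn_of_deriv_pos (convex_Icc 0 1)
    · exact fun x hx => (hlamDeriv x hx).continuousAt.continuousWithinAt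
    · intro x hx
      rw [interior_Icc] at hx
      rw [(hlamDeriv x (Ioo_subset_Icc_self hx)).deriv]
      exact hlam'pos x (Ioo_subset_Icc_self hx)
  have hLa : 0 < lam (a t) := by
    have := hlamMono h0Icc haIcc haI.1
    rwa [hlam0] at this
  have hLb : 0 < lam (b t) := by
    have := hlamMono h0Icc hbIcc hbI.1
    rwa [hlam0] at this
  have hga : 0 < c' (a t) :=
    lt_of_le_of_lt (hc'nonneg 0 h0Ico) (hc'strictMono 0 h0Ico _ haIco haI.1)
  have hgb : 0 < c' (b t) :=
    lt_of_le_of_lt (hc'nonneg 0 h0Ico) (hc'strictMono 0 h0Ico _ hbIco hbI.1)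
  -- second-derivative signs
  have hc'mono : MonotoneOn c' (Ico (0:ℝ) 1) := by
    intro x hx y hy hxy
    rcases eq_or_lt_of_le hxy with h | h
    · rw [h]
    · exact (hc'strictMono x hx y hy h).le
  have hlam'anti' : MonotoneOn (fun x => -lam' x) (Icc (0:ℝ) 1) := by
    intro x hx y hy hxy
    simpa using hlam'anti x hx y hy hxy
  have hnIcoA : Ico (0:ℝ) 1 ∈ nhds (a t) :=
    mem_nhds_iff.mpr ⟨Ioo 0 1, Ioo_subset_Ico_self, isOpen_Ioo, haI⟩
  have hnIcoB : Ico (0:ℝ) 1 ∈ nhds (b t) :=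
    mem_nhds_iff.mpr ⟨Ioo 0 1, Ioo_subset_Ico_self, isOpen_Ioo, hbI⟩
  have hnIccA : Icc (0:ℝ) 1 ∈ nhds (a t) :=
    mem_nhds_iff.mpr ⟨Ioo 0 1, Ioo_subset_Icc_self, isOpen_Ioo, haI⟩
  have hnIccB : Icc (0:ℝ) 1 ∈ nhds (b t) :=
    mem_nhds_iff.mpr ⟨Ioo 0 1, Ioo_subset_Icc_self, isOpen_Ioo, hbI⟩
  have hca2 : 0 ≤ c'' (a t) :=
    deriv_nonneg_of_monotoneOn_aux hnIcoA hc'mono (hc'Deriv _ haIco)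
  have hcb2 : 0 ≤ c'' (b t) :=
    deriv_nonneg_of_monotoneOn_aux hnIcoB hc'mono (hc'Deriv _ hbIco)
  have hla2 : lam'' (a t) ≤ 0 := by
    have := deriv_nonneg_of_monotoneOn_aux hnIccA hlam'anti' (hlam'Deriv _ haIcc).neg
    linarith
  have hlb2 : lam'' (b t) ≤ 0 := by
    have := deriv_nonneg_of_monotoneOn_aux hnIccB hlam'anti' (hlam'Deriv _ hbIcc).neg
    linarith
  -- derivatives of the two sides of the two first-order conditions
  have hd_a := hda t ht
  have hd_b := hdb t ht
  have h1 : HasDerivAt (fun s => lam (a s)) (lam' (a t) * a' t) t :=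
    (hlamDeriv _ haIcc).comp t hd_a
  have h7 : HasDerivAt (fun s => lam (b s)) (lam' (b t) * b' t) t :=
    (hlamDeriv _ hbIcc).comp t hd_b
  have h2 : HasDerivAt (fun s => c' (a s)) (c'' (a t) * a' t) t :=
    (hc'Deriv _ haIco).comp t hd_a
  have h3 : HasDerivAt (fun s => lam' (a s)) (lam'' (a t) * a' t) t :=
    (hlam'Deriv _ haIcc).comp t hd_a
  have h2b : HasDerivAt (fun s => c' (b s)) (c'' (b t) * b' t) t :=
    (hc'Deriv _ hbIco).comp t hd_b
  have h3b : HasDerivAt (fun s => lam' (b s)) (lam'' (b t) * b' t) t :=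
    (hlam'Deriv _ hbIcc).comp t hd_b
  have h4 := h2.div h3 hAne
  have h4b := h2b.div h3b hBne
  have h5 : HasDerivAt (fun s : ℝ => (2:ℝ) / s ^ 2)
      ((0 * t ^ 2 - 2 * ((2:ℕ) * t ^ (2 - 1))) / (t ^ 2) ^ 2) t :=
    (hasDerivAt_const t 2).div (hasDerivAt_pow 2 t) (pow_ne_zero 2 htne)
  have h6 := h5.mul h4
  have hL := h1.add h6
  have hmemN : Ioo lo hi ∈ nhds t := isOpen_Ioo.mem_nhds ht
  have heq1 : (fun s => 2 - lam (b s) * dB / s) =ᶠ[nhds t]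
      (fun s => lam (a s) + 2 / s ^ 2 * (c' (a s) / lam' (a s))) := by
    filter_upwards [hmemN] with s hs
    have := hfocA s hs
    simp only [fFun, hFun] at this
    exact this.symm
  have hL' := hL.congr_of_eventuallyEq heq1
  have hR := (hasDerivAt_const t (2:ℝ)).sub
    ((h7.mul_const dB).div (hasDerivAt_id t) htne)
  have eq1 := hL'.unique hR
  -- FOC B
  have hL2 := h7.add (h4b.const_mul (2 / dB ^ 2))
  have heq2 : (fun s => 2 - lam (a s) * s / dB) =ᶠ[nhds t]
      (fun s => lam (b s) + 2 / dB ^ 2 * (c' (b s) / lam' (b s))) := by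
    filter_upwards [hmemN] with s hs
    have := hfocB s hs
    simp only [fFun, hFun] at this
    exact this.symm
  have hL2' := hL2.congr_of_eventuallyEq heq2
  have hR2 := (hasDerivAt_const t (2:ℝ)).sub ((h1.mul (hasDerivAt_id t)).div_const dB)
  have eq2 := hL2'.unique hR2
  simp only [id, Pi.div_apply, Nat.cast_ofNat] at eq1 eq2
  norm_num at eq1 eq2
  field_simp at eq1 eq2
  -- abbreviations
  set A := lam' (a t) with hAdef
  set Bb := lam' (b t) with hBdef
  set u := a' t with hudef
  set v := b' t with hvdef
  set La := lam (a t) with hLadef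
  set Lb := lam (b t) with hLbdef
  set ga := c' (a t) with hgadef
  set gb := c' (b t) with hgbdef
  set ca2 := c'' (a t) with hca2def
  set cb2 := c'' (b t) with hcb2def
  set la2 := lam'' (a t) with hla2def
  set lb2 := lam'' (b t) with hlb2def
  have keyS : u * ((t ^ 3 * A ^ 3 + 2 * t * (ca2 * A - ga * la2)) *
        (dB ^ 2 * Bb ^ 3 + 2 * (cb2 * Bb - gb * lb2)) - A ^ 3 * Bb ^ 3 * dB ^ 2 * t ^ 3) *
        (t ^ 5 * A * dB) =
      ((4 * ga * A + A ^ 2 * dB * t * Lb) *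
        (dB ^ 2 * Bb ^ 3 + 2 * (cb2 * Bb - gb * lb2)) +
        A ^ 2 * Bb ^ 3 * dB ^ 2 * t ^ 2 * La) * (t ^ 5 * A * dB) := by
    linear_combination (t ^ 5 * A * dB * (dB ^ 2 * Bb ^ 3 + 2 * (cb2 * Bb - gb * lb2))) * eq1 -
      (t ^ 5 * A * dB * (A ^ 2 * t ^ 2 * dB * Bb)) * eq2
  have htApos : (0:ℝ) < t ^ 5 * A * dB := mul_pos (mul_pos (pow_pos ht0 5) hApos) hdB
  have key : u * ((t ^ 3 * A ^ 3 + 2 * t * (ca2 * A - ga * la2)) *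
        (dB ^ 2 * Bb ^ 3 + 2 * (cb2 * Bb - gb * lb2)) - A ^ 3 * Bb ^ 3 * dB ^ 2 * t ^ 3) =
      (4 * ga * A + A ^ 2 * dB * t * Lb) *
        (dB ^ 2 * Bb ^ 3 + 2 * (cb2 * Bb - gb * lb2)) +
        A ^ 2 * Bb ^ 3 * dB ^ 2 * t ^ 2 * La :=
    mul_right_cancel₀ (ne_of_gt htApos) keyS
  have hvD : v * (dB ^ 3 * Bb ^ 3 + 2 * dB * (cb2 * Bb - gb * lb2)) =
      -(La + A * u * t) * (dB ^ 2 * Bb ^ 2) := by linear_combination dB * eq2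
  -- abstract the compound nonnegative quantities
  set X := ca2 * A - ga * la2 with hXdef
  set Y := cb2 * Bb - gb * lb2 with hYdef
  have keyC : u * (2 * Y * (t ^ 3 * A ^ 3) + 2 * t * X * (dB ^ 2 * Bb ^ 3) + 4 * t * X * Y) =
      (4 * ga * A + A ^ 2 * dB * t * Lb) * (dB ^ 2 * Bb ^ 3 + 2 * Y) +
        A ^ 2 * Bb ^ 3 * dB ^ 2 * t ^ 2 * La := by
    linear_combination key
  clear key keyS eq1 eq2 hL hL' hL2 hL2' hR hR2 h4 h4b h5 h6 heq1 heq2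
  have hXnn : 0 ≤ X := by
    have h1' := mul_nonneg hca2 hApos.le
    have h2' := mul_nonneg hga.le (neg_nonneg.mpr hla2)
    rw [hXdef]; nlinarith
  have hYnn : 0 ≤ Y := by
    have h1' := mul_nonneg hcb2 hBpos.le
    have h2' := mul_nonneg hgb.le (neg_nonneg.mpr hlb2)
    rw [hYdef]; nlinarith
  have hDpos : 0 < dB ^ 2 * Bb ^ 3 + 2 * Y := by
    have := mul_pos (pow_pos hdB 2) (pow_pos hBpos 3)
    linarith
  have hCnn : 0 ≤ 2 * Y * (t ^ 3 * A ^ 3) + 2 * t * X * (dB ^ 2 * Bb ^ 3) + 4 * t * X * Y := by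
    have e1 : 0 ≤ 2 * Y * (t ^ 3 * A ^ 3) :=
      mul_nonneg (by linarith) (mul_pos (pow_pos ht0 3) (pow_pos hApos 3)).le
    have e2 : 0 ≤ 2 * t * X * (dB ^ 2 * Bb ^ 3) :=
      mul_nonneg (mul_nonneg (by linarith) hXnn)
        (mul_pos (pow_pos hdB 2) (pow_pos hBpos 3)).le
    have e3 : 0 ≤ 4 * t * X * Y :=
      mul_nonneg (mul_nonneg (by linarith) hXnn) hYnn
    linarith
  have hRpos : 0 < (4 * ga * A + A ^ 2 * dB * t * Lb) * (dB ^ 2 * Bb ^ 3 + 2 * Y) +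
      A ^ 2 * Bb ^ 3 * dB ^ 2 * t ^ 2 * La := by
    have p1 : 0 < 4 * ga * A + A ^ 2 * dB * t * Lb := by
      have q1 : 0 < 4 * ga * A := by positivity
      have q2 : 0 < A ^ 2 * dB * t * Lb :=
        mul_pos (mul_pos (mul_pos (pow_pos hApos 2) hdB) ht0) hLb
      linarith
    have p2 := mul_pos p1 hDpos
    have p3 : 0 < A ^ 2 * Bb ^ 3 * dB ^ 2 * t ^ 2 * La :=
      mul_pos (mul_pos (mul_pos (mul_pos (pow_pos hApos 2) (pow_pos hBpos 3))
        (pow_pos hdB 2)) (pow_pos ht0 2)) hLa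
    linarith
  have hu : 0 < u := by
    by_contra h
    push_neg at h
    have h1 : 0 < u * (2 * Y * (t ^ 3 * A ^ 3) + 2 * t * X * (dB ^ 2 * Bb ^ 3) +
        4 * t * X * Y) := by rw [keyC]; exact hRpos
    have h2 : u * (2 * Y * (t ^ 3 * A ^ 3) + 2 * t * X * (dB ^ 2 * Bb ^ 3) +
        4 * t * X * Y) ≤ 0 := mul_nonpos_iff.mpr (Or.inr ⟨h, hCnn⟩)
    exact absurd h1 (not_lt.mpr h2)
  have hv : v < 0 := by
    by_contra h
    push_neg at h
    have c1 : 0 < dB ^ 3 * Bb ^ 3 + 2 * dB * Y := by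
      have e1 := mul_pos (pow_pos hdB 3) (pow_pos hBpos 3)
      have e2 := mul_nonneg hdB.le hYnn
      linarith
    have c2 : 0 < (La + A * u * t) * (dB ^ 2 * Bb ^ 2) :=
      mul_pos (by have := mul_pos (mul_pos hApos hu) ht0; linarith)
        (mul_pos (pow_pos hdB 2) (pow_pos hBpos 2))
    have c3 : 0 ≤ v * (dB ^ 3 * Bb ^ 3 + 2 * dB * Y) := mul_nonneg h c1.le
    have c4 : v * (dB ^ 3 * Bb ^ 3 + 2 * dB * Y) < 0 := by
      rw [hvD]; linarith
    exact absurd c4 (not_lt.mpr c3)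
  exact ⟨hu, hv⟩
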